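/- Let q ≥ 2 be an even integer, m = q(q+1) and n = q(q² + q − 1). Suppose there exists an m×n real matrix Φ all of whose entries lie in {+1, −1}, such that every column of Φ is orthogonal to the all-ones vector 1 ∈ ℝ^m, |⟨φ_i, φ_j⟩| = q for all distinct columns φ_i, φ_j, and ΦΦᵀ = q²(q+1)·(I − (1/m)·J). Then there exist q²(q+2) vectors ψ_1, …, ψ_{q²(q+2)} in ℝ^{q(q+1)}, all of the same positive norm, whose pairwise inner products all have the same absolute value, and whose rank-one outer products sum to a positive multiple of the identity; that is, there exists a real equiangular tight frame of q²(q+2) vectors for ℝ^{q(q+1)}. -/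

import Mathlib

open Matrix in
/-- If for an even `q ≥ 2` there is a `{±1}`-valued `q(q+1) × q(q²+q−1)` matrix whose
columns form an ETF for `1^⊥` with `|⟨φᵢ, φⱼ⟩| = q` (a solution to the supersaturated
design problem), then there is a real equiangular tight frame of `q²(q+2)` vectors for
`ℝ^{q(q+1)}`: equal-norm vectors with constant pairwise `|⟨·,·⟩|` whose rank-one outer
products sum to a positive multiple of the identity. -/
theorem real_etf_from_supersaturated (q : ℕ) (hq : 2 ≤ q) (hqe : Even q)
    (Φ : Matrix (Fin (q * (q + 1))) (Fin (q * (q ^ 2 + q - 1))) ℝ)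
    (hpm : ∀ i j, Φ i j = 1 ∨ Φ i j = -1)
    (horth : ∀ j, ∑ i, Φ i j = 0)
    (hang : ∀ j j', j ≠ j' → |(Φᵀ * Φ) j j'| = q)
    (htight : Φ * Φᵀ = ((q : ℝ) ^ 2 * ((q : ℝ) + 1)) •
      ((1 : Matrix (Fin (q * (q + 1))) (Fin (q * (q + 1))) ℝ) -
        ((q * (q + 1) : ℕ) : ℝ)⁻¹ • Matrix.of fun _ _ => 1)) :
    ∃ Ψ : Matrix (Fin (q * (q + 1))) (Fin (q ^ 2 * (q + 2))) ℝ,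
      (∃ r : ℝ, 0 < r ∧ ∀ j, (Ψᵀ * Ψ) j j = r) ∧
      (∃ w : ℝ, ∀ j j', j ≠ j' → |(Ψᵀ * Ψ) j j'| = w) ∧
      (∃ a : ℝ, 0 < a ∧ Ψ * Ψᵀ = a • 1) := by
  classical
  have hq0 : 0 < q := by omega
  have hqR : (0:ℝ) < q := by exact_mod_cast hq0
  have harith : q ^ 2 * (q + 2) = q * (q ^ 2 + q - 1) + q * (q + 1) := by
    have h1 : q ^ 2 + q - 1 + 1 = q ^ 2 + q :=
      Nat.sub_add_cancel ((by omega : 1 ≤ q).trans (Nat.le_add_left q (q ^ 2)))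
    have hstep : q ^ 2 * (q + 2) + q = q * (q ^ 2 + q - 1) + q * (q + 1) + q := by
      calc q ^ 2 * (q + 2) + q = q * (q ^ 2 + q) + q * (q + 1) := by ring
        _ = q * (q ^ 2 + q - 1 + 1) + q * (q + 1) := by rw [h1]
        _ = q * (q ^ 2 + q - 1) + q * (q + 1) + q := by ring
    exact Nat.add_right_cancel hstep
  have hmR : ((q * (q + 1) : ℕ) : ℝ) = (q:ℝ) * ((q:ℝ) + 1) := by push_cast; ring
  have hdpos : (0:ℝ) < (q:ℝ) * ((q:ℝ) + 1) := by positivity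
  set s : ℝ := Real.sqrt ((q:ℝ) + 2) with hs_def
  have hs2 : s ^ 2 = (q:ℝ) + 2 := Real.sq_sqrt (by positivity)
  set β : ℝ := (q:ℝ) * (s - 1) / ((q:ℝ) * ((q:ℝ) + 1)) with hβ
  have hc : 2 * (q:ℝ) * β + ((q:ℝ) * ((q:ℝ) + 1)) * β ^ 2 = q := by
    rw [hβ]; field_simp; linear_combination hs2
  set M : Matrix (Fin (q * (q + 1))) (Fin (q * (q + 1))) ℝ :=
    Matrix.of (fun i k => (q:ℝ) * (if i = k then 1 else 0) + β) with hM
  have hMsymm : ∀ i k, M i k = M k i := by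
    intro i k; simp only [hM, Matrix.of_apply, eq_comm]
  -- Gram of M columns
  have hMM : ∀ x y : Fin (q * (q + 1)), ∑ b, M x b * M y b
      = (if x = y then (q:ℝ)^2 else 0) + q := by
    intro x y
    have expand : ∀ b, M x b * M y b
        = (q:ℝ)^2 * ((if x = b then (1:ℝ) else 0) * (if y = b then 1 else 0))
          + (q:ℝ) * β * (if x = b then 1 else 0)
          + (q:ℝ) * β * (if y = b then 1 else 0) + β ^ 2 := by
      intro b; simp only [hM, Matrix.of_apply]; ring
    rw [Finset.sum_congr rfl fun b _ => expand b]
    have h1 : ∑ b : Fin (q * (q + 1)), ((if x = b then (1:ℝ) else 0) * (if y = b then 1 else 0))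
        = if x = y then 1 else 0 := by
      simp [ite_mul, Finset.sum_ite_eq, eq_comm]
    have h2 : ∑ b : Fin (q * (q + 1)), (if x = b then (1:ℝ) else 0) = 1 := by
      simp [Finset.sum_ite_eq]
    have h3 : ∑ b : Fin (q * (q + 1)), (if y = b then (1:ℝ) else 0) = 1 := by
      simp [Finset.sum_ite_eq]
    rw [Finset.sum_add_distrib, Finset.sum_add_distrib, Finset.sum_add_distrib,
      ← Finset.mul_sum, ← Finset.mul_sum, ← Finset.mul_sum, h1, h2, h3,
      Finset.sum_const, Finset.card_univ, Fintype.card_fin, nsmul_eq_mul, hmR]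
    have : (q:ℝ)^2 * (if x = y then (1:ℝ) else 0) = (if x = y then (q:ℝ)^2 else 0) := by
      split <;> ring
    rw [this]; linarith [hc]
  -- cross Gram
  have hΦM : ∀ a b, ∑ i, Φ i a * M i b = (q:ℝ) * Φ b a := by
    intro a b
    calc ∑ i, Φ i a * M i b
        = ∑ i, ((q:ℝ) * ((if i = b then (1:ℝ) else 0) * Φ i a) + Φ i a * β) := by
          refine Finset.sum_congr rfl fun i _ => ?_
          simp only [hM, Matrix.of_apply]; ring
      _ = (q:ℝ) * (∑ i, (if i = b then (1:ℝ) else 0) * Φ i a) + (∑ i, Φ i a) * β := by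
          rw [Finset.sum_add_distrib, ← Finset.mul_sum, Finset.sum_mul]
      _ = (q:ℝ) * Φ b a := by
          rw [horth a]; simp [ite_mul, Finset.sum_ite_eq']
  have hΦdiag : ∀ a, ∑ i, Φ i a * Φ i a = (q:ℝ) * ((q:ℝ) + 1) := by
    intro a
    have h : ∀ i ∈ Finset.univ, Φ i a * Φ i a = (1:ℝ) := by
      intro i _; rcases hpm i a with h | h <;> rw [h] <;> norm_num
    rw [Finset.sum_congr rfl h, Finset.sum_const, Finset.card_univ, Fintype.card_fin,
      nsmul_eq_mul, hmR, mul_one]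
  have habsΦ : ∀ i j, |Φ i j| = 1 := by
    intro i j; rcases hpm i j with h | h <;> rw [h] <;> norm_num
  set e : Fin (q ^ 2 * (q + 2)) ≃ (Fin (q * (q ^ 2 + q - 1)) ⊕ Fin (q * (q + 1))) :=
    (finCongr harith).trans finSumFinEquiv.symm with he
  set Ψ : Matrix (Fin (q * (q + 1))) (Fin (q ^ 2 * (q + 2))) ℝ :=
    Matrix.of (fun i j => Sum.elim (fun a => Φ i a) (fun b => M i b) (e j)) with hΨ
  have hgram : ∀ j j', (Ψᵀ * Ψ) j j' =
      ∑ i, Sum.elim (fun a => Φ i a) (fun b => M i b) (e j)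
        * Sum.elim (fun a => Φ i a) (fun b => M i b) (e j') := by
    intro j j'
    simp [Matrix.mul_apply, hΨ]
  refine ⟨Ψ, ⟨(q:ℝ)^2 + q, by positivity, ?_⟩, ⟨(q:ℝ), ?_⟩, ⟨(q:ℝ)^2 * ((q:ℝ) + 2), by positivity, ?_⟩⟩
  · -- equal norms
    intro j
    rw [hgram]
    rcases h : e j with a | b
    · simp only [h, Sum.elim_inl]
      rw [hΦdiag a]; ring
    · simp only [h, Sum.elim_inr]
      have hsw : ∑ x, M x b * M x b = ∑ x, M b x * M b x :=
        Finset.sum_congr rfl fun x _ => by rw [hMsymm x b]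
      rw [hsw, hMM b b]; simp
  · -- equiangular
    intro j j' hne
    have hee : e j ≠ e j' := fun h => hne (e.injective h)
    rw [hgram]
    rcases h1 : e j with a | b <;> rcases h2 : e j' with a' | b' <;>
      simp only [h1, h2, Sum.elim_inl, Sum.elim_inr]
    · have haa : a ≠ a' := by rintro rfl; exact hee (h1.trans h2.symm)
      have : ∑ i, Φ i a * Φ i a' = (Φᵀ * Φ) a a' := by
        simp [Matrix.mul_apply]
      rw [this]; exact hang a a' haa
    · rw [hΦM a b', abs_mul, habsΦ, mul_one, abs_of_pos hqR]
    · have : ∑ i, M i b * Φ i a' = ∑ i, Φ i a' * M i b := by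
        refine Finset.sum_congr rfl fun i _ => mul_comm _ _
      rw [this, hΦM a' b, abs_mul, habsΦ, mul_one, abs_of_pos hqR]
    · have hbb : b ≠ b' := by rintro rfl; exact hee (h1.trans h2.symm)
      have : ∑ i, M i b * M i b' = ∑ i, M b i * M b' i := by
        refine Finset.sum_congr rfl fun i _ => by rw [hMsymm i b, hMsymm i b']
      rw [this, hMM b b', if_neg hbb, zero_add, abs_of_pos hqR]
  · -- tightness
    ext i i'
    have hrow : (Ψ * Ψᵀ) i i' = ∑ j, Sum.elim (fun a => Φ i a) (fun b => M i b) (e j)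
        * Sum.elim (fun a => Φ i' a) (fun b => M i' b) (e j) := by
      simp [Matrix.mul_apply, hΨ]
    have hre : ∑ j, Sum.elim (fun a => Φ i a) (fun b => M i b) (e j)
        * Sum.elim (fun a => Φ i' a) (fun b => M i' b) (e j)
        = ∑ x, Sum.elim (fun a => Φ i a) (fun b => M i b) x
        * Sum.elim (fun a => Φ i' a) (fun b => M i' b) x :=
      Fintype.sum_equiv e _ _ (fun j => rfl)
    have hP : ∑ a, Φ i a * Φ i' a = (Φ * Φᵀ) i i' := by
      simp [Matrix.mul_apply]
    rw [hrow, hre, Fintype.sum_sum_type]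
    simp only [Sum.elim_inl, Sum.elim_inr]
    rw [hP, htight, hMM i i']
    simp only [Matrix.smul_apply, Matrix.sub_apply, Matrix.one_apply, Matrix.of_apply,
      smul_eq_mul, mul_one]
    rw [hmR]
    rcases eq_or_ne i i' with rfl | hne
    · simp only [if_pos rfl, eq_self_iff_true, ↓reduceIte]
      field_simp
      ring
    · simp only [if_neg hne]
      field_simp
      ring
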